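/- If T is a tree on n ≥ 2 vertices, then S[T,t] is a tree for every t ≥ 1, and hence χ(S[T,t]) = 2. -/

import Mathlib

variable {V : Type*}

/-- Adjacency of the generalized Sierpiński graph `S(G,t)` on words of length `t`:
`u` and `v` are adjacent iff there is an index `i` with `u j = v j` for `j < i`,
`u i` adjacent to `v i` in `G`, and `u j = v i`, `v j = u i` for `j > i`. -/
def sierAdj (G : SimpleGraph V) (t : ℕ) (u v : Fin t → V) : Prop :=
  ∃ i : Fin t, (∀ j, j < i → u j = v j) ∧ G.Adj (u i) (v i) ∧
    ∀ j, i < j → u j = v i ∧ v j = u i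

/-- The generalized Sierpiński graph `S(G,t)`. -/
def sier (G : SimpleGraph V) (t : ℕ) : SimpleGraph (Fin t → V) where
  Adj := sierAdj G t
  symm := by
    constructor
    rintro u v ⟨i, h1, h2, h3⟩
    exact ⟨i, fun j hj => (h1 j hj).symm, h2.symm,
      fun j hj => ⟨(h3 j hj).2, (h3 j hj).1⟩⟩
  loopless := by
    constructor
    rintro u ⟨i, h1, h2, h3⟩
    exact G.irrefl h2

/-- `linkingAt G t p u v` : `uv` is a linking edge of `S(G,t)` appearing at
(0-indexed) position `p < t - 1`; in the paper's terminology this linking edge is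
produced at step `t - p`, and its contraction is a vertex contracted at step `t - p`. -/
def linkingAt (G : SimpleGraph V) (t p : ℕ) (u v : Fin t → V) : Prop :=
  ∃ i : Fin t, i.val = p ∧ i.val + 1 < t ∧ (∀ j, j < i → u j = v j) ∧
    G.Adj (u i) (v i) ∧ ∀ j, i < j → u j = v i ∧ v j = u i

/-- `uv` is a linking edge of `S(G,t)` (an edge appearing at some step `≥ 2`). -/
def linking (G : SimpleGraph V) (t : ℕ) (u v : Fin t → V) : Prop :=
  ∃ p, linkingAt G t p u v

/-- The equivalence relation on words generated by identifying the two endpoints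
of each linking edge. -/
def gasketSetoid (G : SimpleGraph V) (t : ℕ) : Setoid (Fin t → V) :=
  Relation.EqvGen.setoid (linking G t)

/-- The generalized Sierpiński gasket graph `S[G,t]`, obtained from `S(G,t)` by
contracting all linking edges. -/
def gasket (G : SimpleGraph V) (t : ℕ) :
    SimpleGraph (Quotient (gasketSetoid G t)) where
  Adj x y := x ≠ y ∧ ∃ u v, Quotient.mk (gasketSetoid G t) u = x ∧
    Quotient.mk (gasketSetoid G t) v = y ∧ sierAdj G t u v
  symm := by
    constructor
    rintro x y ⟨hxy, u, v, hu, hv, h⟩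
    exact ⟨hxy.symm, v, u, hv, hu, (sier G t).adj_symm h⟩
  loopless := ⟨fun _ h => h.1 rfl⟩

/-- The expanded word `i j j ... j`; for `ij ∈ E(G)` its class in `S[G,t]` is the
contracted vertex `{i,j}_t`. -/
def topWord (t : ℕ) (i j : V) : Fin t → V := fun k => if k.val = 0 then i else j

set_option linter.unusedSectionVars false
set_option linter.unusedVariables false

section Aux

variable [DecidableEq V]

/-- In an acyclic graph, every walk from `b` to `a` with `a ~ b` must use the edge `ab`. -/
lemma aux_L1 {G : SimpleGraph V} (hG : G.IsAcyclic) {a b : V} (hab : G.Adj a b)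
    (w : G.Walk b a) (he : s(a, b) ∉ w.edges) : False := by
  have hpath : w.bypass.IsPath := SimpleGraph.Walk.bypass_isPath w
  have hsub := SimpleGraph.Walk.edges_bypass_subset w
  have : s(a, b) ∉ w.bypass.edges := fun h => he (hsub h)
  exact hG _ (SimpleGraph.Path.cons_isCycle ⟨w.bypass, hpath⟩ hab this)

/-- Splitting a walk at an edge which occurs exactly once. -/
lemma aux_L2 {G : SimpleGraph V} {x y : V} (p : G.Walk x y) (e : Sym2 V)
    (h : p.edges.count e = 1) :
    ∃ a b, e = s(a, b) ∧ G.Adj a b ∧ (∃ q : G.Walk x a, e ∉ q.edges) ∧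
      (∃ r : G.Walk b y, e ∉ r.edges) := by
  induction p with
  | nil => simp at h
  | @cons x m y hadj q ih =>
    rw [SimpleGraph.Walk.edges_cons, List.count_cons] at h
    simp only [beq_iff_eq] at h
    by_cases hcase : e = s(x, m)
    · rw [if_pos hcase.symm] at h
      have h0 : q.edges.count e = 0 := by omega
      exact ⟨x, m, hcase, hadj, ⟨SimpleGraph.Walk.nil, by simp⟩,
        ⟨q, List.count_eq_zero.mp h0⟩⟩
    · rw [if_neg (fun hh : s(x,m) = e => hcase hh.symm), add_zero] at h
      obtain ⟨a, b, hab, hadj', ⟨q1, hq1⟩, ⟨r, hr⟩⟩ := ih h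
      refine ⟨a, b, hab, hadj', ⟨SimpleGraph.Walk.cons hadj q1, ?_⟩, ⟨r, hr⟩⟩
      rw [SimpleGraph.Walk.edges_cons, List.mem_cons]
      rintro (h1 | h2)
      · exact hcase h1
      · exact hq1 h2

/-- In an acyclic graph, no closed walk uses an edge exactly once. -/
lemma aux_L3 {G : SimpleGraph V} (hG : G.IsAcyclic) {x : V} (p : G.Walk x x)
    (e : Sym2 V) (h : p.edges.count e = 1) : False := by
  obtain ⟨a, b, hab, hadj, ⟨q, hq⟩, ⟨r, hr⟩⟩ := aux_L2 p e h
  refine aux_L1 hG hadj (r.append q) ?_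
  rw [SimpleGraph.Walk.edges_append, List.mem_append, ← hab]
  rintro (h1 | h2)
  · exact hr h1
  · exact hq h2

/-- If a path ends at `a` and uses an edge `ab`, that edge is the last one, so there is a
shorter walk to `b`. -/
lemma aux_lastEdge {G : SimpleGraph V} {r a b : V} (p : G.Walk r a) (hp : p.IsPath)
    (hadj : G.Adj a b) (he : s(a, b) ∈ p.edges) :
    ∃ q : G.Walk r b, q.length + 1 = p.length := by
  have hrev : p.reverse.IsPath := hp.reverse
  have herev : s(a, b) ∈ p.reverse.edges := by
    rw [SimpleGraph.Walk.edges_reverse, List.mem_reverse]; exact he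
  have hlen : p.reverse.length = p.length := SimpleGraph.Walk.length_reverse p
  cases hw : p.reverse with
  | nil => rw [hw] at herev; simp at herev
  | cons hadj' tl =>
    rename_i c
    rw [hw] at herev hrev hlen
    rw [SimpleGraph.Walk.edges_cons, List.mem_cons] at herev
    rcases herev with h1 | h2
    · rw [Sym2.eq_iff] at h1
      rcases h1 with ⟨-, rfl⟩ | ⟨-, h4⟩
      · exact ⟨tl.reverse, by simp at hlen ⊢; omega⟩
      · exact absurd h4.symm hadj.ne
    · exfalso
      have hmem := SimpleGraph.Walk.fst_mem_support_of_mem_edges tl h2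
      rw [SimpleGraph.Walk.cons_isPath_iff] at hrev
      exact hrev.2 hmem

/-- In a connected acyclic graph, adjacent vertices have distances to the root differing
by exactly one. -/
lemma aux_dist_ne {G : SimpleGraph V} (hG : G.IsAcyclic) (hc : G.Connected) {r x y : V}
    (hadj : G.Adj x y) : G.dist r x ≠ G.dist r y := by
  intro heq
  obtain ⟨px, hpx, hlx⟩ := hc.exists_path_of_dist r x
  obtain ⟨py, hpy, hly⟩ := hc.exists_path_of_dist r y
  have key : s(x, y) ∈ px.edges ∨ s(x, y) ∈ py.edges := by
    by_contra hcon
    push_neg at hcon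
    refine aux_L1 hG hadj (py.reverse.append px) ?_
    rw [SimpleGraph.Walk.edges_append, List.mem_append, SimpleGraph.Walk.edges_reverse,
      List.mem_reverse]
    rintro (h1 | h2)
    · exact hcon.2 h1
    · exact hcon.1 h2
  rcases key with h1 | h2
  · obtain ⟨q, hq⟩ := aux_lastEdge px hpx hadj h1
    have := G.dist_le q
    omega
  · obtain ⟨q, hq⟩ := aux_lastEdge py hpy hadj.symm (by rwa [Sym2.eq_swap])
    have := G.dist_le q
    omega

/-- A tree with at least one edge has chromatic number two. -/
lemma aux_tree_chrom {G : SimpleGraph V} (hG : G.IsTree) {a b : V} (hadj : G.Adj a b) :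
    G.chromaticNumber = 2 := by
  obtain ⟨hc, hacyc⟩ := hG
  have hr : V := Classical.choice hc.nonempty
  -- 2-coloring by parity of distance from `hr`
  have hcol : G.Colorable 2 := by
    refine ⟨SimpleGraph.Coloring.mk (fun v => ⟨G.dist hr v % 2, Nat.mod_lt _ (by norm_num)⟩) ?_⟩
    intro x y hxy hfeq
    have hne := aux_dist_ne hacyc hc (r := hr) hxy
    have h1 : G.dist hr y ≤ G.dist hr x + 1 := by
      obtain ⟨p, -, hl⟩ := hc.exists_path_of_dist hr x
      have := G.dist_le (p.concat hxy)
      rw [SimpleGraph.Walk.length_concat] at this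
      omega
    have h2 : G.dist hr x ≤ G.dist hr y + 1 := by
      obtain ⟨p, -, hl⟩ := hc.exists_path_of_dist hr y
      have := G.dist_le (p.concat hxy.symm)
      rw [SimpleGraph.Walk.length_concat] at this
      omega
    have : G.dist hr x % 2 = G.dist hr y % 2 := congrArg Fin.val hfeq
    omega
  have hub : G.chromaticNumber ≤ 2 := by
    exact_mod_cast hcol.chromaticNumber_le
  have hlb : ¬ G.Colorable 1 := by
    rintro ⟨C⟩
    have := C.valid hadj
    exact this (Subsingleton.elim _ _)
  have : ¬ G.chromaticNumber ≤ 1 := by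
    rw [show ((1 : ℕ∞)) = ((1 : ℕ) : ℕ∞) by norm_num,
      SimpleGraph.chromaticNumber_le_iff_colorable]
    exact hlb
  refine le_antisymm hub ?_
  have h2 : (1 : ℕ∞) < G.chromaticNumber := lt_of_not_ge this
  exact Order.add_one_le_of_lt h2

lemma sier_adj_coord {G : SimpleGraph V} {t : ℕ} {u v : Fin t → V} (m : Fin t)
    (h : sierAdj G t u v) : u m = v m ∨ G.Adj (u m) (v m) := by
  obtain ⟨i, h1, h2, h3⟩ := h
  rcases lt_trichotomy m i with hm | hm | hm
  · exact Or.inl (h1 m hm)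
  · subst hm; exact Or.inr h2
  · right
    obtain ⟨ha, hb⟩ := h3 m hm
    rw [ha, hb]; exact h2.symm

/-- The first-difference structure of an `S(G,t)` edge. -/
lemma sier_shape {G : SimpleGraph V} {t : ℕ} {u v : Fin t → V} (h : sierAdj G t u v)
    (i : Fin t) (hne : u i ≠ v i) (hpre : ∀ j, j < i → u j = v j) :
    G.Adj (u i) (v i) ∧ ∀ j, i < j → u j = v i ∧ v j = u i := by
  obtain ⟨i', h1, h2, h3⟩ := h
  rcases lt_trichotomy i i' with hm | hm | hm
  · exact absurd (h1 i hm) hne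
  · subst hm; exact ⟨h2, h3⟩
  · exact absurd (hpre i' hm) h2.ne

/-- Projection of a walk in `S(G,t)` onto coordinate `m`. -/
def projC {G : SimpleGraph V} {t : ℕ} (m : Fin t) :
    ∀ {u v : Fin t → V}, (sier G t).Walk u v → G.Walk (u m) (v m)
  | _, _, .nil => .nil
  | u, v, @SimpleGraph.Walk.cons _ _ _ w _ h p =>
      if he : u m = w m then (projC m p).copy he.symm rfl
      else .cons ((sier_adj_coord m h).resolve_left he) (projC m p)

lemma projC_count {G : SimpleGraph V} {t : ℕ} (m : Fin t) {u v : Fin t → V}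
    (p : (sier G t).Walk u v) (e : Sym2 (Fin t → V)) (a b : V)
    (H : ∀ d ∈ p.darts, d.toProd.1 m ≠ d.toProd.2 m →
      (s(d.toProd.1 m, d.toProd.2 m) = s(a, b) ↔ s(d.toProd.1, d.toProd.2) = e))
    (He : ∀ x y : Fin t → V, s(x, y) = e → x m ≠ y m) :
    (projC m p).edges.count s(a, b) = p.edges.count e := by
  induction p with
  | nil => simp [projC]
  | @cons x w y h q ih =>
    have Hq : ∀ d ∈ q.darts, d.toProd.1 m ≠ d.toProd.2 m →
        (s(d.toProd.1 m, d.toProd.2 m) = s(a, b) ↔ s(d.toProd.1, d.toProd.2) = e) := by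
      intro d hd
      exact H d (by rw [SimpleGraph.Walk.darts_cons]; exact List.mem_cons_of_mem _ hd)
    have Hhead := H ⟨(x, w), h⟩ (by rw [SimpleGraph.Walk.darts_cons]; exact List.mem_cons_self)
    rw [SimpleGraph.Walk.edges_cons]
    by_cases he : x m = w m
    · have hne : s(x, w) ≠ e := fun hc => (He x w hc) he
      rw [show projC m (SimpleGraph.Walk.cons h q) = (projC m q).copy he.symm rfl from dif_pos he]
      rw [SimpleGraph.Walk.edges_copy, List.count_cons_of_ne hne]
      exact ih Hq
    · rw [show projC m (SimpleGraph.Walk.cons h q)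
          = SimpleGraph.Walk.cons ((sier_adj_coord m h).resolve_left he) (projC m q)
          from dif_neg he]
      rw [SimpleGraph.Walk.edges_cons]
      rw [List.count_cons, List.count_cons, ih Hq]
      congr 1
      have hiff := Hhead he
      by_cases hc : s(x, w) = e
      · rw [if_pos (beq_iff_eq.mpr hc), if_pos (beq_iff_eq.mpr (hiff.mpr hc))]
      · rw [if_neg (fun hb => hc (beq_iff_eq.mp hb)),
          if_neg (fun hb => hc (hiff.mp (beq_iff_eq.mp hb)))]

lemma walk_coord_const {G : SimpleGraph V} {t : ℕ} (j : Fin t) {u v : Fin t → V}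
    (p : (sier G t).Walk u v)
    (H : ∀ d ∈ p.darts, d.toProd.1 j = d.toProd.2 j) :
    ∀ z ∈ p.support, z j = u j := by
  induction p with
  | nil => intro z hz; simp at hz; rw [hz]
  | @cons x w y h q ih =>
    intro z hz
    rw [SimpleGraph.Walk.support_cons, List.mem_cons] at hz
    have hhead : x j = w j :=
      H ⟨(x, w), h⟩ (by rw [SimpleGraph.Walk.darts_cons]; exact List.mem_cons_self)
    rcases hz with rfl | hz
    · rfl
    · have ih' := ih (fun d hd => H d (by
        rw [SimpleGraph.Walk.darts_cons]
        exact List.mem_cons_of_mem _ hd))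
      rw [ih' z hz, ← hhead]

theorem sier_acyclic {G : SimpleGraph V} (hG : G.IsAcyclic) (t : ℕ) :
    (sier G t).IsAcyclic := by
  classical
  intro x c hc
  -- a first dart
  have hlen : 3 ≤ c.length := hc.three_le_length
  have hdne : c.darts ≠ [] := by
    intro hnil
    have := SimpleGraph.Walk.length_darts c
    rw [hnil] at this
    simp at this
    omega
  obtain ⟨d1, hd1⟩ := List.exists_mem_of_ne_nil _ hdne
  obtain ⟨i1, hpre1, hadj1, hsuf1⟩ := (d1.adj : sierAdj G t _ _)
  have hP : ∃ n : ℕ, ∃ (hn : n < t), ∃ d ∈ c.darts,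
      d.toProd.1 ⟨n, hn⟩ ≠ d.toProd.2 ⟨n, hn⟩ :=
    ⟨i1.val, i1.isLt, d1, hd1, by simpa using hadj1.ne⟩
  obtain ⟨hm0t, d0, hd0mem, hd0ne⟩ := Nat.find_spec hP
  have hmin := fun k (hk : k < Nat.find hP) => Nat.find_min hP hk
  set m0 := Nat.find hP with hm0def
  set i0 : Fin t := ⟨m0, hm0t⟩ with hi0def
  -- below i0 all darts are constant
  have hbelow : ∀ d ∈ c.darts, ∀ j : Fin t, j < i0 → d.toProd.1 j = d.toProd.2 j := by
    intro d hd j hj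
    by_contra hne
    exact hmin j.val hj ⟨j.isLt, d, hd, by simpa using hne⟩
  -- support is constant below i0
  have hsup : ∀ z ∈ c.support, ∀ j : Fin t, j < i0 → z j = x j := by
    intro z hz j hj
    exact walk_coord_const j c (fun d hd => hbelow d hd j hj) z hz
  set a := d0.toProd.1 i0 with ha
  set b := d0.toProd.2 i0 with hb
  have hshape0 := sier_shape (d0.adj : sierAdj G t _ _) i0 hd0ne
    (fun j hj => hbelow d0 hd0mem j hj)
  have hadjab : G.Adj a b := hshape0.1
  -- determinedness of darts differing at i0 and with letters {a, b}
  have hdet : ∀ d ∈ c.darts, d.toProd.1 i0 ≠ d.toProd.2 i0 →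
      (s(d.toProd.1 i0, d.toProd.2 i0) = s(a, b) ↔
        s(d.toProd.1, d.toProd.2) = s(d0.toProd.1, d0.toProd.2)) := by
    intro d hd hne
    constructor
    · intro hl
      have hshape := sier_shape (d.adj : sierAdj G t _ _) i0 hne
        (fun j hj => hbelow d hd j hj)
      have hpre : ∀ j : Fin t, j < i0 → d.toProd.1 j = d0.toProd.1 j := by
        intro j hj
        rw [hsup d.toProd.1 (SimpleGraph.Walk.dart_fst_mem_support_of_mem_darts c hd) j hj,
          hsup d0.toProd.1 (SimpleGraph.Walk.dart_fst_mem_support_of_mem_darts c hd0mem) j hj]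
      rw [Sym2.eq_iff] at hl
      rcases hl with ⟨h1, h2⟩ | ⟨h1, h2⟩
      · have e1 : d.toProd.1 = d0.toProd.1 := by
          funext j
          rcases lt_trichotomy j i0 with hj | hj | hj
          · exact hpre j hj
          · rw [hj]; rw [h1, ha]
          · rw [(hshape.2 j hj).1, (hshape0.2 j hj).1, h2, hb]
        have e2 : d.toProd.2 = d0.toProd.2 := by
          funext j
          rcases lt_trichotomy j i0 with hj | hj | hj
          · rw [← hbelow d hd j hj, ← hbelow d0 hd0mem j hj]; exact hpre j hj
          · rw [hj]; rw [h2, hb]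
          · rw [(hshape.2 j hj).2, (hshape0.2 j hj).2, h1, ha]
        rw [e1, e2]
      · have e1 : d.toProd.1 = d0.toProd.2 := by
          funext j
          rcases lt_trichotomy j i0 with hj | hj | hj
          · rw [hpre j hj]; exact hbelow d0 hd0mem j hj
          · rw [hj]; rw [h1, hb]
          · rw [(hshape.2 j hj).1, (hshape0.2 j hj).2, h2, ha]
        have e2 : d.toProd.2 = d0.toProd.1 := by
          funext j
          rcases lt_trichotomy j i0 with hj | hj | hj
          · rw [← hbelow d hd j hj, hpre j hj]
          · rw [hj]; rw [h2, ha]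
          · rw [(hshape.2 j hj).2, (hshape0.2 j hj).1, h1, hb]
        rw [e1, e2, Sym2.eq_swap]
    · intro hr
      rw [Sym2.eq_iff] at hr
      rcases hr with ⟨h1, h2⟩ | ⟨h1, h2⟩
      · rw [h1, h2]
      · rw [h1, h2, ← ha, ← hb, Sym2.eq_swap]
  -- the count of the special edge in the cycle is one
  have hemem : s(d0.toProd.1, d0.toProd.2) ∈ c.edges := by
    exact List.mem_map_of_mem (f := SimpleGraph.Dart.edge) hd0mem
  have hcount1 : c.edges.count s(d0.toProd.1, d0.toProd.2) = 1 :=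
    hc.isTrail.count_edges_eq_one hemem
  have He : ∀ xx yy : Fin t → V, s(xx, yy) = s(d0.toProd.1, d0.toProd.2) →
      xx i0 ≠ yy i0 := by
    intro xx yy hxy
    rw [Sym2.eq_iff] at hxy
    rcases hxy with ⟨h1, h2⟩ | ⟨h1, h2⟩ <;> rw [h1, h2] <;>
      [exact hd0ne; exact fun hcon => hd0ne hcon.symm]
  have hproj := projC_count i0 c s(d0.toProd.1, d0.toProd.2) a b hdet He
  rw [hcount1] at hproj
  exact aux_L3 hG (projC i0 c) s(a, b) hproj

lemma sier_cons_adj {G : SimpleGraph V} {t : ℕ} {u v : Fin t → V} (a : V)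
    (h : sierAdj G t u v) : sierAdj G (t + 1) (Fin.cons a u) (Fin.cons a v) := by
  obtain ⟨i, h1, h2, h3⟩ := h
  refine ⟨i.succ, ?_, by simpa using h2, ?_⟩
  · intro j
    refine Fin.cases ?_ ?_ j
    · intro _; simp
    · intro k hk
      have hk' : k < i := (Fin.succ_lt_succ_iff).mp hk
      simpa using h1 k hk'
  · intro j
    refine Fin.cases ?_ ?_ j
    · intro hj0; exact absurd hj0 (by simp [Fin.lt_def])
    · intro k hk
      have hk' : i < k := (Fin.succ_lt_succ_iff).mp hk
      simpa using h3 k hk' 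

lemma sier_hop {G : SimpleGraph V} {t : ℕ} {a b : V} (h : G.Adj a b) :
    sierAdj G (t + 1) (Fin.cons a (fun _ => b)) (Fin.cons b (fun _ => a)) := by
  refine ⟨0, ?_, by simpa using h, ?_⟩
  · intro j hj
    exact absurd hj (by simp [Fin.lt_def])
  · intro j hj
    have hj0 : j ≠ 0 := by
      intro hc; rw [hc] at hj; exact lt_irrefl _ hj
    obtain ⟨k, rfl⟩ := Fin.eq_succ_of_ne_zero hj0
    simp

lemma sier_reach_lift {G : SimpleGraph V} {t : ℕ} {u v : Fin t → V} (a : V)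
    (h : (sier G t).Reachable u v) :
    (sier G (t + 1)).Reachable (Fin.cons a u) (Fin.cons a v) := by
  let φ : sier G t →g sier G (t + 1) :=
    ⟨fun w => Fin.cons a w, fun hadj => sier_cons_adj a hadj⟩
  exact h.map φ

lemma sier_preconnected {G : SimpleGraph V} (hG : G.Preconnected) :
    ∀ t, (sier G t).Preconnected := by
  intro t
  induction t with
  | zero =>
    intro u v
    have : u = v := funext fun j => j.elim0
    rw [this]
  | succ t ih =>
    have claim : ∀ (a b : V) (u v : Fin t → V),
        (sier G (t + 1)).Reachable (Fin.cons a u) (Fin.cons b v) := by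
      intro a b u v
      obtain ⟨w⟩ := hG a b
      induction w generalizing u v with
      | nil => exact sier_reach_lift _ (ih u v)
      | @cons a c b hadj w ihw =>
        refine ((sier_reach_lift a (ih u (fun _ => c))).trans
          (SimpleGraph.Adj.reachable (sier_hop hadj))).trans ?_
        exact ihw (fun _ => a) v
    intro x y
    have hx := Fin.cons_self_tail x
    have hy := Fin.cons_self_tail y
    rw [← hx, ← hy]
    exact claim _ _ _ _

-- ===================== linking structure =====================

lemma linking_symm {G : SimpleGraph V} {t : ℕ} {u v : Fin t → V}
    (h : linking G t u v) : linking G t v u := by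
  obtain ⟨p, i, hi, hit, h1, h2, h3⟩ := h
  exact ⟨p, i, hi, hit, fun j hj => (h1 j hj).symm, h2.symm,
    fun j hj => ⟨(h3 j hj).2, (h3 j hj).1⟩⟩

lemma linking_sierAdj {G : SimpleGraph V} {t : ℕ} {u v : Fin t → V}
    (h : linking G t u v) : sierAdj G t u v := by
  obtain ⟨p, i, hi, hit, h1, h2, h3⟩ := h
  exact ⟨i, h1, h2, h3⟩

lemma linking_unique {G : SimpleGraph V} {t : ℕ} {u v v' : Fin t → V}
    (h : linking G t u v) (h' : linking G t u v') : v = v' := by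
  obtain ⟨p, i, hi, hit, h1, h2, h3⟩ := h
  obtain ⟨p', i', hi', hit', h1', h2', h3'⟩ := h'
  -- auxiliary: from two witnesses at distinct positions derive a contradiction
  have key : ∀ (a b : Fin t) (w w' : Fin t → V), b.val + 1 < t → a < b →
      (∀ j, a < j → u j = w a) → G.Adj (u b) (w' b) →
      (∀ j, b < j → u j = w' b) → False := by
    intro a b w w' hbt hlt hsuf hadj hsuf'
    have hj' : b < (⟨b.val + 1, hbt⟩ : Fin t) := by simp [Fin.lt_def]
    have e1 : u ⟨b.val + 1, hbt⟩ = w' b := hsuf' _ hj'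
    have e2 : u ⟨b.val + 1, hbt⟩ = w a := hsuf _ (lt_trans hlt hj')
    have e3 : u b = w a := hsuf _ hlt
    rw [e3, ← e2, e1] at hadj
    exact G.irrefl hadj
  have hii : i = i' := by
    rcases lt_trichotomy i i' with hlt | heq | hlt
    · exact absurd (key i i' v v' hit' hlt
        (fun j hj => (h3 j hj).1) h2' (fun j hj => (h3' j hj).1)) (fun hf => hf)
    · exact heq
    · exact absurd (key i' i v' v hit hlt
        (fun j hj => (h3' j hj).1) h2 (fun j hj => (h3 j hj).1)) (fun hf => hf)
  subst hii
  have hvi : v i = v' i := by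
    have hj : i < (⟨i.val + 1, hit⟩ : Fin t) := by simp [Fin.lt_def]
    rw [← (h3 _ hj).1, (h3' _ hj).1]
  funext j
  rcases lt_trichotomy j i with hj | hj | hj
  · rw [← h1 j hj, h1' j hj]
  · rw [hj, hvi]
  · rw [(h3 j hj).2, (h3' j hj).2]

lemma eqv_char {G : SimpleGraph V} {t : ℕ} {u v : Fin t → V}
    (h : Relation.EqvGen (linking G t) u v) : u = v ∨ linking G t u v := by
  induction h with
  | rel x y h => exact Or.inr h
  | refl x => exact Or.inl rfl
  | symm x y h ih =>
    rcases ih with rfl | hl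
    · exact Or.inl rfl
    · exact Or.inr (linking_symm hl)
  | trans x y z h1 h2 ih1 ih2 =>
    rcases ih1 with rfl | hl1
    · exact ih2
    · rcases ih2 with rfl | hl2
      · exact Or.inr hl1
      · exact Or.inl (linking_unique (linking_symm hl1) hl2)

lemma mk_eq_iff {G : SimpleGraph V} {t : ℕ} {u v : Fin t → V} :
    Quotient.mk (gasketSetoid G t) u = Quotient.mk (gasketSetoid G t) v ↔
      (u = v ∨ linking G t u v) := by
  rw [Quotient.eq]
  constructor
  · intro h
    exact eqv_char h
  · rintro (rfl | hl)
    · exact Relation.EqvGen.refl _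
    · exact Relation.EqvGen.rel _ _ hl

noncomputable local instance gasketDecEq {G : SimpleGraph V} {t : ℕ} :
    DecidableEq (Quotient (gasketSetoid G t)) := Classical.decEq _

-- ===================== gasket connectivity =====================

lemma gasket_adj_def {G : SimpleGraph V} {t : ℕ} {x y : Quotient (gasketSetoid G t)} :
    (gasket G t).Adj x y ↔ x ≠ y ∧ ∃ u v, Quotient.mk (gasketSetoid G t) u = x ∧
      Quotient.mk (gasketSetoid G t) v = y ∧ sierAdj G t u v := Iff.rfl

lemma sier_adj_mk {G : SimpleGraph V} {t : ℕ} {u v : Fin t → V}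
    (h : sierAdj G t u v) : (sier G t).Adj u v := h

lemma gasket_preconnected {G : SimpleGraph V} {t : ℕ}
    (h : (sier G t).Preconnected) : (gasket G t).Preconnected := by
  have step : ∀ u v : Fin t → V, (sier G t).Adj u v →
      (gasket G t).Reachable (Quotient.mk (gasketSetoid G t) u)
        (Quotient.mk (gasketSetoid G t) v) := by
    intro u v hadj
    by_cases he : Quotient.mk (gasketSetoid G t) u = Quotient.mk (gasketSetoid G t) v
    · rw [he]
    · exact SimpleGraph.Adj.reachable (gasket_adj_def.mpr ⟨he, u, v, rfl, rfl, hadj⟩)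
  intro x y
  obtain ⟨u, rfl⟩ := x.exists_rep
  obtain ⟨v, rfl⟩ := y.exists_rep
  obtain ⟨w⟩ := h u v
  induction w with
  | nil => exact SimpleGraph.Reachable.refl _
  | cons hadj q ih => exact (step _ _ hadj).trans ih

-- ===================== gasket acyclicity =====================

lemma connector_walk {G : SimpleGraph V} {t : ℕ} {u v : Fin t → V}
    (h : Quotient.mk (gasketSetoid G t) u = Quotient.mk (gasketSetoid G t) v) :
    ∃ q : (sier G t).Walk u v, ∀ e ∈ q.edges, ∃ a b, e = s(a, b) ∧ linking G t a b := by
  rcases mk_eq_iff.mp h with rfl | hl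
  · exact ⟨SimpleGraph.Walk.nil, by simp⟩
  · refine ⟨SimpleGraph.Walk.cons (sier_adj_mk (linking_sierAdj hl)) SimpleGraph.Walk.nil, ?_⟩
    intro e he
    simp only [SimpleGraph.Walk.edges_cons, SimpleGraph.Walk.edges_nil,
      List.mem_singleton] at he
    exact ⟨u, v, he, hl⟩

lemma lift_walk {G : SimpleGraph V} {t : ℕ} {u₁ v₁ : Fin t → V}
    (he0 : ∀ a b, s(u₁, v₁) = s(a, b) → ¬ linking G t a b) :
    ∀ {y w : Quotient (gasketSetoid G t)} (p : (gasket G t).Walk y w)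
      (v u : Fin t → V), Quotient.mk (gasketSetoid G t) v = y →
      Quotient.mk (gasketSetoid G t) u = w →
      ∃ q : (sier G t).Walk v u,
        q.edges.count s(u₁, v₁) ≤ p.edges.count
          s(Quotient.mk (gasketSetoid G t) u₁, Quotient.mk (gasketSetoid G t) v₁) := by
  intro y w p
  induction p with
  | nil =>
    intro v u hv hu
    obtain ⟨q, hq⟩ := connector_walk (hv.trans hu.symm)
    refine ⟨q, ?_⟩
    have : q.edges.count s(u₁, v₁) = 0 := by
      rw [List.count_eq_zero]
      intro hmem
      obtain ⟨a, b, hab, hl⟩ := hq _ hmem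
      exact he0 a b hab hl
    omega
  | @cons y m w hadj p ih =>
    intro v u hv hu
    obtain ⟨hne, w₁, w₂, hw₁, hw₂, hsadj⟩ := gasket_adj_def.mp hadj
    obtain ⟨q0, hq0⟩ := connector_walk (hv.trans hw₁.symm)
    obtain ⟨q1, hcount1⟩ := ih w₂ u hw₂ hu
    refine ⟨q0.append (SimpleGraph.Walk.cons (sier_adj_mk hsadj) q1), ?_⟩
    simp only [SimpleGraph.Walk.edges_append, SimpleGraph.Walk.edges_cons,
      List.count_append, List.count_cons]
    have hq0count : q0.edges.count s(u₁, v₁) = 0 := by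
      rw [List.count_eq_zero]
      intro hmem
      obtain ⟨a, b, hab, hl⟩ := hq0 _ hmem
      exact he0 a b hab hl
    rw [hq0count, zero_add]
    have hind : (if (s(w₁, w₂) == s(u₁, v₁)) = true then 1 else 0) ≤
        (if (s(y, m) == s(Quotient.mk (gasketSetoid G t) u₁,
          Quotient.mk (gasketSetoid G t) v₁)) = true then (1:ℕ) else 0) := by
      by_cases hcc : s(w₁, w₂) = s(u₁, v₁)
      · have : s(y, m) = s(Quotient.mk (gasketSetoid G t) u₁,
            Quotient.mk (gasketSetoid G t) v₁) := by
          rw [← hw₁, ← hw₂]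
          rw [Sym2.eq_iff] at hcc ⊢
          rcases hcc with ⟨h1, h2⟩ | ⟨h1, h2⟩
          · exact Or.inl ⟨by rw [h1], by rw [h2]⟩
          · exact Or.inr ⟨by rw [h1], by rw [h2]⟩
        rw [if_pos (beq_iff_eq.mpr hcc), if_pos (beq_iff_eq.mpr this)]
      · rw [if_neg (fun hb => hcc (beq_iff_eq.mp hb))]
        omega
    omega

lemma gasket_acyclic {G : SimpleGraph V} {t : ℕ}
    (hs : (sier G t).IsAcyclic) : (gasket G t).IsAcyclic := by
  intro x c hc
  cases c with
  | nil =>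
    have := hc.three_le_length
    simp at this
  | cons hadj p =>
    rename_i z
    obtain ⟨hne, u₁, v₁, hu, hv, hsadj⟩ := gasket_adj_def.mp hadj
    have he0 : ∀ a b, s(u₁, v₁) = s(a, b) → ¬ linking G t a b := by
      intro a b hab hl
      have : Quotient.mk (gasketSetoid G t) a = Quotient.mk (gasketSetoid G t) b :=
        mk_eq_iff.mpr (Or.inr hl)
      rw [Sym2.eq_iff] at hab
      apply hne
      rcases hab with ⟨h1, h2⟩ | ⟨h1, h2⟩
      · rw [← hu, ← hv, h1, h2]; exact this
      · rw [← hu, ← hv, h1, h2]; exact this.symm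
    -- the head edge occurs exactly once in the cycle
    have hE : s(x, z) = s(Quotient.mk (gasketSetoid G t) u₁,
        Quotient.mk (gasketSetoid G t) v₁) := by rw [hu, hv]
    have hhead : s(x, z) ∈ (SimpleGraph.Walk.cons
        (gasket_adj_def.mpr ⟨hne, u₁, v₁, hu, hv, hsadj⟩ : (gasket G t).Adj x z) p).edges := by
      rw [SimpleGraph.Walk.edges_cons]; exact List.mem_cons_self
    have h1 := hc.isTrail.count_edges_eq_one hhead
    rw [SimpleGraph.Walk.edges_cons, List.count_cons_self] at h1
    have hp0 : p.edges.count s(x, z) = 0 := by omega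
    obtain ⟨q, hq⟩ := lift_walk he0 p v₁ u₁ hv hu
    rw [← hE, hp0] at hq
    have hcount : (SimpleGraph.Walk.cons (sier_adj_mk hsadj) q :
        (sier G t).Walk u₁ u₁).edges.count s(u₁, v₁) = 1 := by
      rw [SimpleGraph.Walk.edges_cons, List.count_cons_self]
      omega
    exact aux_L3 hs _ _ hcount

end Aux

/-- if `T` is a tree on `n ≥ 2` vertices then `S[T,t]` is a tree for every
`t ≥ 1`, and hence `χ(S[T,t]) = 2`. -/
theorem stmt_13 [Fintype V] (T : SimpleGraph V) (hT : T.IsTree)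
    (hn : 2 ≤ Fintype.card V) (t : ℕ) (ht : 1 ≤ t) :
    (gasket T t).IsTree ∧ (gasket T t).chromaticNumber = 2 := by
  classical
  obtain ⟨hconn, hacyc⟩ := hT
  -- an edge of T
  obtain ⟨x0, y0, hxy0⟩ := Fintype.exists_pair_of_one_lt_card (by omega : 1 < Fintype.card V)
  obtain ⟨w0⟩ := hconn.preconnected x0 y0
  obtain ⟨a0, b0, hab0⟩ : ∃ a b : V, T.Adj a b := by
    cases w0 with
    | nil => exact absurd rfl hxy0
    | cons h _ => exact ⟨_, _, h⟩
  -- an edge of the gasket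
  set u : Fin t → V := fun _ => a0 with hu_def
  set v : Fin t → V := fun k => if k.val = t - 1 then b0 else a0 with hv_def
  have hit : t - 1 < t := by omega
  have hsadj : sierAdj T t u v := by
    refine ⟨⟨t - 1, hit⟩, ?_, ?_, ?_⟩
    · intro j hj
      have : j.val ≠ t - 1 := by
        rw [Fin.lt_def] at hj; exact Nat.ne_of_lt hj
      simp only [hv_def, hu_def, if_neg this]
    · simpa only [hv_def, hu_def, if_pos rfl] using hab0
    · intro j hj
      exfalso
      rw [Fin.lt_def] at hj
      have := j.isLt
      simp only at hj
      omega
  have hneq : Quotient.mk (gasketSetoid T t) u ≠ Quotient.mk (gasketSetoid T t) v := by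
    intro h
    rcases mk_eq_iff.mp h with h | h
    · have : u ⟨t - 1, hit⟩ = v ⟨t - 1, hit⟩ := by rw [h]
      simp only [hu_def, hv_def, if_pos rfl] at this
      exact hab0.ne this
    · obtain ⟨p, i, hi, hit', hpre, hadj, hsuf⟩ := h
      have hj : i < (⟨i.val + 1, hit'⟩ : Fin t) := by simp [Fin.lt_def]
      have h1 : u ⟨i.val + 1, hit'⟩ = v i := (hsuf _ hj).1
      have h2 : u i = a0 := rfl
      rw [show u ⟨i.val + 1, hit'⟩ = a0 from rfl] at h1
      rw [h2, ← h1] at hadj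
      exact T.irrefl hadj
  have hedge : (gasket T t).Adj (Quotient.mk (gasketSetoid T t) u)
      (Quotient.mk (gasketSetoid T t) v) := gasket_adj_def.mpr ⟨hneq, u, v, rfl, rfl, hsadj⟩
  have hVne : Nonempty V := by
    have : 0 < Fintype.card V := by omega
    exact Fintype.card_pos_iff.mp this
  have htree : (gasket T t).IsTree := by
    constructor
    · rw [SimpleGraph.connected_iff]
      exact ⟨gasket_preconnected (sier_preconnected hconn.preconnected t),
        ⟨Quotient.mk (gasketSetoid T t) u⟩⟩
    · exact gasket_acyclic (sier_acyclic hacyc t)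
  exact ⟨htree, aux_tree_chrom htree hedge⟩
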